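/- Let L and L' be real normed spaces, let B : L × L → L' be a continuous symmetric bilinear map, and let Q : L → L' be given by Q(u) = B(u,u). Then the following conditions are equivalent: (i) for all u, v ∈ L, Q(u) = Q(v) implies v = u or v = -u; (ii) B is nondegenerate in the sense that for every u ∈ L with u ≠ 0, the equality B(u,v) = 0 implies v = 0. -/
import Mathlib


/-- Theorem 2: For the quadratic operator `Q(u) = B(u,u)` of a
continuous symmetric bilinear map `B`, the equation `Q(u) = g` has at most two
solutions (i.e. `Q(u) = Q(v)` implies `v = ±u`) iff `B` is nondegenerate. -/
theorem atMostTwoSolutions_iff_nondegenerate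
    {L L' : Type*} [NormedAddCommGroup L] [NormedSpace ℝ L]
    [NormedAddCommGroup L'] [NormedSpace ℝ L']
    (B : L → L → L')
    (hBcont : Continuous (fun p : L × L => B p.1 p.2))
    (hBsymm : ∀ u v : L, B u v = B v u)
    (hBaddl : ∀ u v w : L, B (u + v) w = B u w + B v w)
    (hBsmull : ∀ (k : ℝ) (u v : L), B (k • u) v = k • B u v)
    (hBaddr : ∀ u v w : L, B u (v + w) = B u v + B u w)
    (hBsmulr : ∀ (k : ℝ) (u v : L), B u (k • v) = k • B u v)
    (Q : L → L') (hQ : ∀ u : L, Q u = B u u) :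
    (∀ u v : L, Q u = Q v → v = u ∨ v = -u) ↔
    (∀ u : L, u ≠ 0 → ∀ v : L, B u v = 0 → v = 0) := by
  have hnegl : ∀ u v : L, B (-u) v = -(B u v) := by
    intro u v
    rw [← neg_one_smul ℝ u, hBsmull, neg_one_smul]
  have hnegr : ∀ u v : L, B u (-v) = -(B u v) := by
    intro u v
    rw [← neg_one_smul ℝ v, hBsmulr, neg_one_smul]
  constructor
  · intro h u hu v hBuv
    have hQeq : Q (u + v) = Q (u - v) := by
      rw [hQ, hQ]
      simp only [sub_eq_add_neg, hBaddl, hBaddr, hnegl, hnegr]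
      rw [hBuv, hBsymm v u, hBuv]
      abel
    rcases h (u + v) (u - v) hQeq with h1 | h1
    · -- u - v = u + v ⇒ v = 0
      have : v = -v := by
        have := h1
        rw [sub_eq_add_neg] at this
        exact (add_right_injective u this).symm
      have h2 : (2 : ℝ) • v = 0 := by
        rw [two_smul]
        exact add_eq_zero_iff_eq_neg.mpr this
      have := smul_eq_zero.mp h2
      rcases this with h3 | h3
      · norm_num at h3
      · exact h3
    · -- u - v = -(u + v) ⇒ u = 0, contradiction
      exfalso
      apply hu
      have : (2 : ℝ) • u = 0 := by
        rw [two_smul]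
        have : u - v + (u + v) = 0 := by rw [h1]; abel
        calc u + u = u - v + (u + v) := by abel
          _ = 0 := this
      rcases smul_eq_zero.mp this with h3 | h3
      · norm_num at h3
      · exact h3
  · intro h u v hQuv
    have key : B (u - v) (u + v) = 0 := by
      rw [sub_eq_add_neg, hBaddl, hnegl, hBaddr, hBaddr]
      rw [hQ, hQ] at hQuv
      rw [hBsymm v u, hQuv]
      abel
    by_cases hd : u - v = 0
    · left; exact (sub_eq_zero.mp hd).symm
    · right
      have h2 : u + v = 0 := h (u - v) hd (u + v) key
      rw [eq_neg_iff_add_eq_zero, add_comm]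
      exact h2
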